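/- Let V : ℝ³ → ℝ be continuous and supported in the closed ball of radius R > 0, and let f ∈ C²(ℝ³) satisfy −Δf(x) + (1/2) V(x) f(x) = 0 for all x ∈ ℝ³, together with f(x) = 1 − a/|x| for all |x| ≥ R (for some constant a ∈ ℝ). Then ∫_{ℝ³} V(x) f(x) dx = 8π a. -/

import Mathlib

open MeasureTheory Real

/-- The Laplacian of a function on `ℝ³`, as the sum of the second partial derivatives
in the coordinate directions. -/
noncomputable def laplacian3 (f : EuclideanSpace ℝ (Fin 3) → ℝ)
    (x : EuclideanSpace ℝ (Fin 3)) : ℝ :=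
  ∑ i : Fin 3,
    fderiv ℝ (fun y => fderiv ℝ f y (EuclideanSpace.single i 1)) x (EuclideanSpace.single i 1)

open Real Set MeasureTheory

noncomputable section
namespace ScatProof

lemma hasDerivAt_piecewise {c : ℝ} {p q p' q' : ℝ → ℝ}
    (hp : ∀ t, HasDerivAt p (p' t) t) (hq : ∀ t, c ≤ t → HasDerivAt q (q' t) t)
    (h0 : p c = q c) (h1 : p' c = q' c) (t : ℝ) :
    HasDerivAt (fun s => if s < c then p s else q s)
      (if t < c then p' t else q' t) t := by
  rcases lt_trichotomy t c with h | heq | h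
  · rw [if_pos h]
    refine (hp t).congr_of_eventuallyEq ?_
    filter_upwards [isOpen_Iio.mem_nhds (show t ∈ Iio c from h)] with u hu
    exact if_pos hu
  · subst heq
    rw [if_neg (lt_irrefl t)]
    have hl : HasDerivWithinAt (fun s => if s < t then p s else q s) (q' t) (Iic t) t := by
      rw [← h1]
      refine ((hp t).hasDerivWithinAt).congr (fun u hu => ?_) ?_
      · rcases lt_or_eq_of_le (mem_Iic.mp hu) with h' | h'
        · exact if_pos h'
        · rw [if_neg (by simp [h']), h', ← h0]
      · rw [if_neg (lt_irrefl t), ← h0]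
    have hr : HasDerivWithinAt (fun s => if s < t then p s else q s) (q' t) (Ici t) t := by
      refine ((hq t le_rfl).hasDerivWithinAt).congr (fun u hu => ?_) ?_
      · exact if_neg (not_lt.mpr (mem_Ici.mp hu))
      · exact if_neg (lt_irrefl t)
    have := hl.union hr
    rwa [Iic_union_Ici, hasDerivWithinAt_univ] at this
  · rw [if_neg (not_lt.mpr h.le)]
    refine (hq t h.le).congr_of_eventuallyEq ?_
    filter_upwards [isOpen_Ioi.mem_nhds (show t ∈ Ioi c from h)] with u hu
    exact if_neg (not_lt.mpr (le_of_lt hu))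

lemma continuous_piecewise {c : ℝ} {p q : ℝ → ℝ}
    (hp : Continuous p) (hq : ∀ t, c ≤ t → ContinuousAt q t)
    (h0 : p c = q c) :
    Continuous (fun s => if s < c then p s else q s) := by
  rw [continuous_iff_continuousAt]
  intro t
  rcases lt_trichotomy t c with h | heq | h
  · refine (hp.continuousAt).congr ?_
    filter_upwards [isOpen_Iio.mem_nhds (show t ∈ Iio c from h)] with u hu
    exact (if_pos hu).symm
  · subst heq
    have hl : ContinuousWithinAt (fun s => if s < t then p s else q s) (Iic t) t := by
      refine (hp.continuousAt.continuousWithinAt).congr (fun u hu => ?_) ?_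
      · rcases lt_or_eq_of_le (mem_Iic.mp hu) with h' | h'
        · exact if_pos h'
        · rw [if_neg (by simp [h']), h', ← h0]
      · rw [if_neg (lt_irrefl t), ← h0]
    have hr : ContinuousWithinAt (fun s => if s < t then p s else q s) (Ici t) t := by
      refine ((hq t le_rfl).continuousWithinAt).congr (fun u hu => ?_) ?_
      · exact if_neg (not_lt.mpr (mem_Ici.mp hu))
      · exact if_neg (lt_irrefl t)
    have := hl.union hr
    rwa [Iic_union_Ici, continuousWithinAt_univ] at this
  · refine ((hq t h.le).congr ?_)
    filter_upwards [isOpen_Ioi.mem_nhds (show t ∈ Ioi c from h)] with u hu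
    exact (if_neg (not_lt.mpr (le_of_lt hu))).symm

def pp (R t : ℝ) : ℝ := -15/(8*R) + 5/(4*R^3) * t + -3/(8*R^5) * t^2
def pp1 (R t : ℝ) : ℝ := 5/(4*R^3) + -3/(4*R^5) * t
def pp2 (R : ℝ) (_t : ℝ) : ℝ := -3/(4*R^5)
def qq (t : ℝ) : ℝ := -(Real.sqrt t)⁻¹
def qq1 (t : ℝ) : ℝ := (Real.sqrt t)⁻¹ * t⁻¹ / 2
def qq2 (t : ℝ) : ℝ := -(3/4) * ((Real.sqrt t)⁻¹ * t⁻¹ * t⁻¹)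
def hh (R t : ℝ) : ℝ := if t < R^2 then pp R t else qq t
def hh1 (R t : ℝ) : ℝ := if t < R^2 then pp1 R t else qq1 t
def hh2 (R t : ℝ) : ℝ := if t < R^2 then pp2 R t else qq2 t

lemma hasDerivAt_pp (R t : ℝ) : HasDerivAt (pp R) (pp1 R t) t := by
  have h : HasDerivAt (pp R) (0 + 5/(4*R^3) * 1 + -3/(8*R^5) * (2 * t ^ 1)) t :=
    ((hasDerivAt_const t _).add ((hasDerivAt_id t).const_mul _)).add
      (((hasDerivAt_pow 2 t)).const_mul _)
  convert h using 1
  simp [pp1]; ring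

lemma hasDerivAt_pp1 (R t : ℝ) : HasDerivAt (pp1 R) (pp2 R t) t := by
  have h : HasDerivAt (pp1 R) (0 + -3/(4*R^5) * 1) t :=
    (hasDerivAt_const t _).add ((hasDerivAt_id t).const_mul _)
  convert h using 1
  simp [pp2]

lemma hasDerivAt_qq {t : ℝ} (ht : 0 < t) : HasDerivAt qq (qq1 t) t := by
  have hs : Real.sqrt t ≠ 0 := by positivity
  have h : HasDerivAt qq _ t := ((Real.hasDerivAt_sqrt ht.ne').inv hs).neg
  convert h using 1
  rw [qq1, Real.sq_sqrt ht.le]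
  field_simp

lemma hasDerivAt_qq1 {t : ℝ} (ht : 0 < t) : HasDerivAt qq1 (qq2 t) t := by
  have hs : Real.sqrt t ≠ 0 := by positivity
  have h : HasDerivAt qq1 _ t := ((((Real.hasDerivAt_sqrt ht.ne').inv hs).mul
    ((hasDerivAt_id t).inv ht.ne')).div_const 2)
  convert h using 1
  rw [qq2]
  simp only [Pi.inv_apply, id]
  field_simp
  rw [Real.sq_sqrt ht.le]
  ring_nf

variable {R : ℝ} (hR : 0 < R)
include hR

lemma match0 : pp R (R^2) = qq (R^2) := by
  rw [pp, qq, Real.sqrt_sq hR.le]; field_simp; ring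

lemma match1 : pp1 R (R^2) = qq1 (R^2) := by
  rw [pp1, qq1, Real.sqrt_sq hR.le]; field_simp; ring

lemma match2 : pp2 R (R^2) = qq2 (R^2) := by
  rw [pp2, qq2, Real.sqrt_sq hR.le]; field_simp

lemma hpos {t : ℝ} (h : R^2 ≤ t) : 0 < t := lt_of_lt_of_le (by positivity) h

lemma hasDerivAt_hh (t : ℝ) : HasDerivAt (hh R) (hh1 R t) t :=
  hasDerivAt_piecewise (hasDerivAt_pp R) (fun t ht => hasDerivAt_qq (hpos hR ht))
    (match0 hR) (match1 hR) t

lemma hasDerivAt_hh1 (t : ℝ) : HasDerivAt (hh1 R) (hh2 R t) t :=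
  hasDerivAt_piecewise (hasDerivAt_pp1 R) (fun t ht => hasDerivAt_qq1 (hpos hR ht))
    (match1 hR) (match2 hR) t

lemma continuous_hh2 : Continuous (hh2 R) := by
  refine continuous_piecewise continuous_const (fun t ht => ?_) (match2 hR)
  have ht0 : 0 < t := hpos hR ht
  have hs : Real.sqrt t ≠ 0 := by positivity
  exact (((Real.continuous_sqrt.continuousAt.inv₀ hs).mul
    (continuousAt_id.inv₀ ht0.ne')).mul (continuousAt_id.inv₀ ht0.ne')).const_mul _

lemma continuous_hh1 : Continuous (hh1 R) :=
  (Differentiable.continuous (fun t => (hasDerivAt_hh1 hR t).differentiableAt))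

lemma contDiff_hh : ContDiff ℝ 2 (hh R) := by
  have hd1 : deriv (hh R) = hh1 R := funext fun t => (hasDerivAt_hh hR t).deriv
  have hd2 : deriv (hh1 R) = hh2 R := funext fun t => (hasDerivAt_hh1 hR t).deriv
  have h2 : (2 : WithTop ℕ∞) = 1 + 1 := by norm_num
  rw [h2, contDiff_succ_iff_deriv]
  refine ⟨fun t => (hasDerivAt_hh hR t).differentiableAt, by simp, ?_⟩
  rw [hd1, contDiff_one_iff_deriv, hd2]
  exact ⟨fun t => (hasDerivAt_hh1 hR t).differentiableAt, continuous_hh2 hR⟩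

omit hR

abbrev E3 : Type := EuclideanSpace ℝ (Fin 3)
abbrev ee (i : Fin 3) : E3 := EuclideanSpace.single i 1


def nsq (x : E3) : ℝ := ∑ i, x i * x i

lemma nsq_eq (x : E3) : nsq x = ‖x‖^2 := by
  rw [EuclideanSpace.norm_eq, Real.sq_sqrt (by positivity)]
  unfold nsq
  refine Finset.sum_congr rfl fun i _ => ?_
  rw [Real.norm_eq_abs, sq_abs, sq]

lemma contDiff_nsq {n : WithTop ℕ∞} : ContDiff ℝ n nsq := by
  apply ContDiff.sum
  intro i _
  exact (EuclideanSpace.proj (𝕜 := ℝ) i).contDiff.mul (EuclideanSpace.proj (𝕜 := ℝ) i).contDiff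

def Dn (x : E3) : E3 →L[ℝ] ℝ :=
  ∑ i, ((x i) • (EuclideanSpace.proj i : E3 →L[ℝ] ℝ) + (x i) • (EuclideanSpace.proj i : E3 →L[ℝ] ℝ))

lemma hasFDerivAt_nsq (x : E3) : HasFDerivAt nsq (Dn x) x := by
  apply HasFDerivAt.fun_sum
  intro i _
  exact (EuclideanSpace.proj (𝕜 := ℝ) i).hasFDerivAt.mul
    (EuclideanSpace.proj (𝕜 := ℝ) i).hasFDerivAt

lemma Dn_apply_ee (x : E3) (i : Fin 3) : Dn x (ee i) = 2 * x i := by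
  simp [Dn, ContinuousLinearMap.sum_apply, EuclideanSpace.single_apply]
  rw [Finset.sum_congr rfl (fun j _ => (by split <;> ring : ((if j = i then x j else 0) + if j = i then x j else 0) = if j = i then 2 * x j else 0)), Finset.sum_ite_eq' Finset.univ i (fun j => 2 * x j)]
  simp


variable {h h1 h2 : ℝ → ℝ}

lemma hasFDerivAt_phi (Hd1 : ∀ t, HasDerivAt h (h1 t) t) (x : E3) :
    HasFDerivAt (fun x => h (nsq x)) (h1 (nsq x) • Dn x) x :=
  (Hd1 (nsq x)).comp_hasFDerivAt x (hasFDerivAt_nsq x)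

lemma fderiv_phi_apply (Hd1 : ∀ t, HasDerivAt h (h1 t) t) (y : E3) (i : Fin 3) :
    fderiv ℝ (fun x => h (nsq x)) y (ee i) = h1 (nsq y) * (2 * y i) := by
  rw [(hasFDerivAt_phi Hd1 y).fderiv]
  simp [Dn_apply_ee]

lemma hasFDerivAt_phi1 (Hd2 : ∀ t, HasDerivAt h1 (h2 t) t) (x : E3) (i : Fin 3) :
    HasFDerivAt (fun y => h1 (nsq y) * (2 * y i))
      ((h1 (nsq x)) • ((2:ℝ) • (EuclideanSpace.proj i : E3 →L[ℝ] ℝ))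
        + (2 * x i) • (h2 (nsq x) • Dn x)) x := by
  have hc : HasFDerivAt (fun y => h1 (nsq y)) (h2 (nsq x) • Dn x) x :=
    (Hd2 (nsq x)).comp_hasFDerivAt x (hasFDerivAt_nsq x)
  have hd : HasFDerivAt (fun y : E3 => 2 * y i)
      ((2:ℝ) • (EuclideanSpace.proj i : E3 →L[ℝ] ℝ)) x :=
    (EuclideanSpace.proj (𝕜 := ℝ) i).hasFDerivAt.const_mul 2
  exact hc.mul hd

lemma laplacian3_phi (Hd1 : ∀ t, HasDerivAt h (h1 t) t)
    (Hd2 : ∀ t, HasDerivAt h1 (h2 t) t) (x : E3) :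
    laplacian3 (fun x => h (nsq x)) x = 6 * h1 (nsq x) + 4 * nsq x * h2 (nsq x) := by
  unfold laplacian3
  have hfun : ∀ i : Fin 3, (fun y => fderiv ℝ (fun x => h (nsq x)) y (EuclideanSpace.single i 1))
      = fun y => h1 (nsq y) * (2 * y i) :=
    fun i => funext fun y => fderiv_phi_apply Hd1 y i
  have hterm : ∀ i : Fin 3,
      fderiv ℝ (fun y => fderiv ℝ (fun x => h (nsq x)) y (EuclideanSpace.single i 1)) x
        (EuclideanSpace.single i 1)
      = 2 * h1 (nsq x) + 4 * (x i * x i) * h2 (nsq x) := by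
    intro i
    rw [hfun i, (hasFDerivAt_phi1 Hd2 x i).fderiv]
    simp [ContinuousLinearMap.add_apply, ContinuousLinearMap.smul_apply, Dn_apply_ee,
      EuclideanSpace.single_apply]
    ring
  rw [Finset.sum_congr rfl (fun i _ => hterm i), Finset.sum_add_distrib, Finset.sum_const]
  have : ∑ i : Fin 3, 4 * (x i * x i) * h2 (nsq x) = 4 * nsq x * h2 (nsq x) := by
    rw [nsq, Finset.mul_sum, Finset.sum_mul]
  rw [this]
  simp [Finset.card_univ]
  ring


lemma contDiff_partial {u : E3 → ℝ} (hu : ContDiff ℝ 2 u) (v : E3) :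
    ContDiff ℝ 1 (fun y => fderiv ℝ u y v) :=
  (hu.fderiv_right (by norm_num)).clm_apply contDiff_const

lemma laplacian3_combo (u w : E3 → ℝ) (hu : ContDiff ℝ 2 u) (hw : ContDiff ℝ 2 w)
    (aa : ℝ) (x : E3) :
    laplacian3 (fun y => u y + aa * w y + 1) x = laplacian3 u x + aa * laplacian3 w x := by
  unfold laplacian3
  have hdu : Differentiable ℝ u := hu.differentiable (by norm_num)
  have hdw : Differentiable ℝ w := hw.differentiable (by norm_num)
  have key : ∀ v : E3, (fun y => fderiv ℝ (fun z => u z + aa * w z + 1) y v)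
      = fun y => fderiv ℝ u y v + aa * fderiv ℝ w y v := by
    intro v
    funext y
    have h1 : fderiv ℝ (fun z => u z + aa * w z + 1) y
        = fderiv ℝ u y + aa • fderiv ℝ w y := by
      rw [fderiv_add_const, fderiv_fun_add (hdu y) ((hdw y).const_mul aa), fderiv_const_mul (hdw y)]
    rw [h1]
    simp
  have hterm : ∀ i : Fin 3,
      fderiv ℝ (fun y => fderiv ℝ (fun z => u z + aa * w z + 1) y (EuclideanSpace.single i 1)) x
        (EuclideanSpace.single i 1)
      = fderiv ℝ (fun y => fderiv ℝ u y (EuclideanSpace.single i 1)) x (EuclideanSpace.single i 1)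
        + aa * fderiv ℝ (fun y => fderiv ℝ w y (EuclideanSpace.single i 1)) x
            (EuclideanSpace.single i 1) := by
    intro i
    rw [key (EuclideanSpace.single i 1)]
    have hdu1 : Differentiable ℝ (fun y => fderiv ℝ u y (EuclideanSpace.single i 1)) :=
      (contDiff_partial hu _).differentiable (by norm_num)
    have hdw1 : Differentiable ℝ (fun y => fderiv ℝ w y (EuclideanSpace.single i 1)) :=
      (contDiff_partial hw _).differentiable (by norm_num)
    rw [fderiv_fun_add (hdu1 x) ((hdw1 x).const_mul aa), fderiv_const_mul (hdw1 x)]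
    simp
  rw [Finset.sum_congr rfl (fun i _ => hterm i), Finset.sum_add_distrib, ← Finset.mul_sum]

lemma continuous_laplacian3 {u : E3 → ℝ} (hu : ContDiff ℝ 2 u) :
    Continuous (laplacian3 u) := by
  apply continuous_finset_sum
  intro i _
  exact ((contDiff_partial hu _).continuous_fderiv one_ne_zero).clm_apply continuous_const

lemma laplacian3_zero_of_notmem {u : E3 → ℝ} {x : E3} (hx : x ∉ tsupport u) :
    laplacian3 u x = 0 := by
  apply Finset.sum_eq_zero
  intro i _
  have h1 : tsupport (fun y => fderiv ℝ u y (EuclideanSpace.single i 1)) ⊆ tsupport u := by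
    apply closure_minimal _ (isClosed_tsupport u)
    intro y hy
    have : fderiv ℝ u y ≠ 0 := fun h => hy (by simp [h])
    exact support_fderiv_subset ℝ (by simpa [Function.mem_support] using this)
  have hx1 : x ∉ tsupport (fun y => fderiv ℝ u y (EuclideanSpace.single i 1)) :=
    fun h => hx (h1 h)
  have : fderiv ℝ (fun y => fderiv ℝ u y (EuclideanSpace.single i 1)) x = 0 := by
    by_contra h
    exact hx1 (support_fderiv_subset ℝ (by simpa [Function.mem_support] using h))
  rw [this]
  rfl


lemma integral_partial2_eq_zero {u : E3 → ℝ} (hu : ContDiff ℝ 2 u)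
    (hc : HasCompactSupport u) (v : E3) :
    ∫ x, fderiv ℝ (fun y => fderiv ℝ u y v) x v = 0 := by
  set w : E3 → ℝ := fun y => fderiv ℝ u y v with hw
  have hw1 : ContDiff ℝ 1 w := contDiff_partial hu v
  have hwc : HasCompactSupport w := hc.fderiv_apply ℝ v
  have hcont : Continuous (fun x => fderiv ℝ w x v) :=
    (hw1.continuous_fderiv one_ne_zero).clm_apply continuous_const
  have h1 : Integrable (fun x => fderiv ℝ (fun _ : E3 => (1:ℝ)) x v * w x) := by
    have : (fun x => fderiv ℝ (fun _ : E3 => (1:ℝ)) x v * w x) = fun _ => 0 := by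
      funext x; simp [fderiv_fun_const]
    rw [this]
    exact integrable_zero _ _ _
  have h2 : Integrable (fun x => (1:ℝ) * fderiv ℝ w x v) := by
    simp only [one_mul]
    exact hcont.integrable_of_hasCompactSupport (hwc.fderiv_apply ℝ v)
  have h3 : Integrable (fun x => (1:ℝ) * w x) := by
    simp only [one_mul]
    exact hw1.continuous.integrable_of_hasCompactSupport hwc
  have := integral_mul_fderiv_eq_neg_fderiv_mul_of_integrable h1 h2 h3
    (fun x _ => (differentiable_const (1:ℝ)) x) (fun x _ => hw1.differentiable one_ne_zero x)
  simp only [one_mul, fderiv_fun_const] at this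
  simpa using this


lemma vol_ball3 : (volume (Metric.ball (0 : E3) 1)).toReal = 4/3*π := by
  rw [EuclideanSpace.volume_ball]
  have hG : Real.Gamma ((Fintype.card (Fin 3) : ℝ)/2 + 1) = 3/4 * Real.sqrt π := by
    rw [Fintype.card_fin]
    have h32 : ((3:ℕ):ℝ)/2 + 1 = (1/2 + 1) + 1 := by norm_num
    rw [h32, Real.Gamma_add_one (by norm_num), Real.Gamma_add_one (by norm_num),
      Real.Gamma_one_half_eq]
    ring
  have hs : Real.sqrt π ≠ 0 := by positivity
  have hsq : Real.sqrt π ^ 2 = π := Real.sq_sqrt pi_pos.le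
  have hval : Real.sqrt π ^ (Fintype.card (Fin 3)) / Real.Gamma ((Fintype.card (Fin 3) : ℝ)/2 + 1)
      = 4/3 * π := by
    rw [hG, Fintype.card_fin, pow_succ, hsq]
    field_simp
  rw [hval]
  simp [ENNReal.toReal_ofReal (by positivity : (0:ℝ) ≤ 4/3*π)]

lemma radial3 (G : ℝ → ℝ) :
    ∫ x : E3, G ‖x‖ = (4*π) * ∫ y in Ioi (0:ℝ), y^2 * G y := by
  rw [MeasureTheory.integral_fun_norm_addHaar volume G]
  have hdim : Module.finrank ℝ E3 = 3 := finrank_euclideanSpace_fin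
  rw [hdim, measureReal_def, vol_ball3]
  simp only [smul_eq_mul, nsmul_eq_mul]
  push_cast
  ring


include hR

lemma G_zero {y : ℝ} (hy : R ≤ y) :
    6 * hh1 R (y^2) + 4 * y^2 * hh2 R (y^2) = 0 := by
  have hy0 : 0 < y := lt_of_lt_of_le hR hy
  have ht : R^2 ≤ y^2 := by nlinarith
  have ht0 : 0 < y^2 := by positivity
  have hnl : ¬ y^2 < R^2 := not_lt.mpr ht
  rw [hh1, hh2, if_neg hnl, if_neg hnl, qq1, qq2]
  have hs : Real.sqrt (y^2) ≠ 0 := by positivity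
  field_simp
  ring

lemma G_poly {y : ℝ} (hy0 : 0 ≤ y) (hy : y < R) :
    6 * hh1 R (y^2) + 4 * y^2 * hh2 R (y^2) = 15/(2*R^3) - 15/(2*R^5) * y^2 := by
  have ht : y^2 < R^2 := by nlinarith
  rw [hh1, hh2, if_pos ht, if_pos ht, pp1, pp2]
  ring

lemma oneD_integral :
    ∫ y in Ioi (0:ℝ), y^2 * (6 * hh1 R (y^2) + 4 * y^2 * hh2 R (y^2)) = 1 := by
  set G : ℝ → ℝ := fun y => 6 * hh1 R (y^2) + 4 * y^2 * hh2 R (y^2) with hG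
  set P : ℝ → ℝ := fun y => 15/(2*R^3) * y^2 - 15/(2*R^5) * y^4 with hP
  have hPcont : Continuous P := by fun_prop
  have hcongr1 : EqOn (fun y => y^2 * G y) P (Ioc 0 R) := by
    intro y hy
    rcases lt_or_eq_of_le hy.2 with h | h
    · simp only [hG, hP]
      rw [G_poly hR hy.1.le h]
      ring
    · simp only [hG, hP, h]
      rw [G_zero hR le_rfl]
      have hR0 : R ≠ 0 := hR.ne'
      field_simp
      ring
  have hcongr2 : EqOn (fun y => y^2 * G y) (fun _ => (0:ℝ)) (Ioi R) := by
    intro y hy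
    simp only [hG]
    rw [G_zero hR (le_of_lt hy)]
    ring
  have hI1 : IntegrableOn (fun y => y^2 * G y) (Ioc 0 R) :=
    (hPcont.integrableOn_Ioc).congr_fun (fun y hy => (hcongr1 hy).symm) measurableSet_Ioc
  have hI2 : IntegrableOn (fun y => y^2 * G y) (Ioi R) := by
    apply (integrableOn_zero).congr_fun (fun y hy => (hcongr2 hy).symm) measurableSet_Ioi
  have hsplit : Ioi (0:ℝ) = Ioc 0 R ∪ Ioi R := (Ioc_union_Ioi_eq_Ioi hR.le).symm
  rw [hsplit, setIntegral_union (Ioc_disjoint_Ioi le_rfl) measurableSet_Ioi hI1 hI2]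
  have h2 : ∫ y in Ioi R, y^2 * G y = 0 := by
    rw [setIntegral_congr_fun measurableSet_Ioi hcongr2]
    simp
  have h1 : ∫ y in Ioc 0 R, y^2 * G y = 1 := by
    rw [setIntegral_congr_fun measurableSet_Ioc hcongr1]
    have : ∫ y in Ioc (0:ℝ) R, P y = ∫ y in (0:ℝ)..R, P y :=
      (intervalIntegral.integral_of_le hR.le).symm
    rw [this, hP]
    have e1 : IntervalIntegrable (fun y : ℝ => 15/(2*R^3) * y^2) volume 0 R :=
      ((intervalIntegral.intervalIntegrable_pow 2).const_mul _)
    have e2 : IntervalIntegrable (fun y : ℝ => 15/(2*R^5) * y^4) volume 0 R :=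
      ((intervalIntegral.intervalIntegrable_pow 4).const_mul _)
    rw [intervalIntegral.integral_sub e1 e2, intervalIntegral.integral_const_mul,
      intervalIntegral.integral_const_mul, integral_pow, integral_pow]
    have hR0 : R ≠ 0 := hR.ne'
    field_simp
    ring
  rw [h1, h2]
  ring

end ScatProof
end

open ScatProof in
theorem scattering_length_identity
    (V f : EuclideanSpace ℝ (Fin 3) → ℝ) (R a : ℝ) (hR : 0 < R)
    (hV : Continuous V) (hsupp : tsupport V ⊆ Metric.closedBall 0 R)
    (hf : ContDiff ℝ 2 f)
    (heq : ∀ x, -laplacian3 f x + (1/2) * V x * f x = 0)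
    (hout : ∀ x : EuclideanSpace ℝ (Fin 3), R ≤ ‖x‖ → f x = 1 - a / ‖x‖) :
    ∫ x, V x * f x = 8 * π * a := by
  set φ : E3 → ℝ := fun x => hh R (nsq x) with hφdef
  have hφ2 : ContDiff ℝ 2 φ := (contDiff_hh hR).comp contDiff_nsq
  set g : E3 → ℝ := fun x => f x - a * φ x - 1 with hgdef
  have hg2 : ContDiff ℝ 2 g := (hf.sub (contDiff_const.mul hφ2)).sub contDiff_const
  have hφout : ∀ x : E3, R ≤ ‖x‖ → φ x = -(‖x‖)⁻¹ := by
    intro x hx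
    have h1 : nsq x = ‖x‖^2 := nsq_eq x
    have h2 : ¬ nsq x < R^2 := by
      rw [h1]
      push_neg
      nlinarith [norm_nonneg x]
    have h2' : ¬ ‖x‖^2 < R^2 := by rwa [h1] at h2
    rw [hφdef]
    simp only [hh, qq, h1, Real.sqrt_sq (norm_nonneg x)]
    rw [if_neg h2']
  have hgzero : ∀ x : E3, R ≤ ‖x‖ → g x = 0 := by
    intro x hx
    have hx0 : ‖x‖ ≠ 0 := ne_of_gt (lt_of_lt_of_le hR hx)
    rw [hgdef]
    simp only [hout x hx, hφout x hx, div_eq_mul_inv]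
    ring
  have hgsupp : tsupport g ⊆ Metric.closedBall 0 R := by
    apply closure_minimal _ Metric.isClosed_closedBall
    intro x hx
    rw [Metric.mem_closedBall, dist_zero_right]
    by_contra h
    exact hx (hgzero x (le_of_lt (not_le.mp h)))
  have hgc : HasCompactSupport g :=
    HasCompactSupport.intro (isCompact_closedBall 0 R)
      (fun x hx => hgzero x (by
        rw [Metric.mem_closedBall, dist_zero_right, not_le] at hx
        exact hx.le))
  have hfd : f = fun y => g y + a * φ y + 1 := by
    funext y
    rw [hgdef]
    ring
  have hlap : ∀ x, laplacian3 f x = laplacian3 g x + a * laplacian3 φ x := by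
    intro x
    conv_lhs => rw [hfd]
    exact laplacian3_combo g φ hg2 hφ2 a x
  have hVf : ∀ x, V x * f x = 2 * laplacian3 f x := by
    intro x
    have := heq x
    linarith
  have hLφ : ∀ x : E3, laplacian3 φ x = 6 * hh1 R (nsq x) + 4 * nsq x * hh2 R (nsq x) :=
    laplacian3_phi (hasDerivAt_hh hR) (hasDerivAt_hh1 hR)
  have hLφsupp : HasCompactSupport (laplacian3 φ) := by
    apply HasCompactSupport.intro (isCompact_closedBall 0 R)
    intro x hx
    rw [Metric.mem_closedBall, dist_zero_right, not_le] at hx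
    rw [hLφ x, nsq_eq x]
    exact G_zero hR hx.le
  have hint_φ : Integrable (laplacian3 φ) :=
    (continuous_laplacian3 hφ2).integrable_of_hasCompactSupport hLφsupp
  have hΔg_supp : HasCompactSupport (laplacian3 g) :=
    HasCompactSupport.intro (isCompact_closedBall 0 R)
      (fun x hx => laplacian3_zero_of_notmem (fun hmem => hx (hgsupp hmem)))
  have hint_g : Integrable (laplacian3 g) :=
    (continuous_laplacian3 hg2).integrable_of_hasCompactSupport hΔg_supp
  have hintg0 : ∫ x, laplacian3 g x = 0 := by
    have hlg : (fun x => laplacian3 g x) = fun x => ∑ i : Fin 3,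
        fderiv ℝ (fun y => fderiv ℝ g y (EuclideanSpace.single i 1)) x
          (EuclideanSpace.single i 1) := rfl
    rw [hlg, MeasureTheory.integral_finset_sum]
    · exact Finset.sum_eq_zero fun i _ => integral_partial2_eq_zero hg2 hgc _
    · intro i _
      refine Continuous.integrable_of_hasCompactSupport ?_ ?_
      · exact ((contDiff_partial hg2 _).continuous_fderiv one_ne_zero).clm_apply continuous_const
      · exact (hgc.fderiv_apply ℝ _).fderiv_apply ℝ _
  have hintφval : ∫ x, laplacian3 φ x = 4 * π := by
    set G : ℝ → ℝ := fun y => 6 * hh1 R (y^2) + 4 * y^2 * hh2 R (y^2) with hGdef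
    have : (fun x : E3 => laplacian3 φ x) = fun x => G ‖x‖ := by
      funext x
      rw [hLφ x, nsq_eq x, hGdef]
    rw [this, radial3 G, hGdef]
    rw [oneD_integral hR]
    ring
  have hmain : (fun x => V x * f x) = fun x =>
      2 * laplacian3 g x + (2*a) * laplacian3 φ x := by
    funext x
    rw [hVf x, hlap x]
    ring
  rw [hmain, integral_add (hint_g.const_mul 2) (hint_φ.const_mul (2*a)),
    integral_const_mul, integral_const_mul, hintg0, hintφval]
  ring
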